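/- Fix reals r ≠ 0 and α, ρ > 0, and for κ > 0 set T(κ) = (α/(2ρ)) κ. Then the singular value ratio of data uniformly distributed on the arc of half-angle T(κ) satisfies lim_{κ → 0⁺} (1/κ) · √(Var₁(T(κ)) / Var₂(T(κ))) = α / (2 √15 ρ); that is, σ₂/σ₁ ≈ M κ with M = α/(2√15 ρ), where κ = 1/r is the curvature when α points are uniformly distributed with density ρ on the arc. -/

import Mathlib

open MeasureTheory intervalIntegral Filter

/-- Mean of the first coordinate under the uniform distribution on the arc. -/
noncomputable def mu1 (r T : ℝ) : ℝ := (1 / (2 * T)) * ∫ t in (-T)..T, r * Real.cos t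

/-- Variance of the first coordinate under the uniform distribution on the arc. -/
noncomputable def Var1 (r T : ℝ) : ℝ :=
  (1 / (2 * T)) * ∫ t in (-T)..T, (r * Real.cos t - mu1 r T) ^ 2

/-- Variance of the second coordinate under the uniform distribution on the arc. -/
noncomputable def Var2 (r T : ℝ) : ℝ :=
  (1 / (2 * T)) * ∫ t in (-T)..T, (r * Real.sin t) ^ 2

/- ## Auxiliary lemmas -/

section Aux

open Real

/-- If `f 0 = 0` and `f` has nonnegative derivative on `[0, ∞)`, then `f ≥ 0` there. -/
lemma nonneg_of_deriv (f f' : ℝ → ℝ) (hd : ∀ x, HasDerivAt f (f' x) x)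
    (h0 : f 0 = 0) (h' : ∀ x, 0 ≤ x → 0 ≤ f' x) : ∀ x, 0 ≤ x → 0 ≤ f x := by
  intro x hx
  have hm : MonotoneOn f (Set.Ici 0) := by
    apply monotoneOn_of_deriv_nonneg (convex_Ici 0)
      (Continuous.continuousOn (by
        have : Differentiable ℝ f := fun y => (hd y).differentiableAt
        exact this.continuous))
      (fun y hy => ((hd y).differentiableAt.differentiableWithinAt))
    intro y hy
    rw [(hd y).deriv]
    exact h' y (le_of_lt (by simpa using hy))
  calc (0:ℝ) = f 0 := h0.symm
    _ ≤ f x := hm Set.self_mem_Ici hx hx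

lemma sin_ge3 : ∀ x : ℝ, 0 ≤ x → x - x^3/6 ≤ sin x := by
  have h := nonneg_of_deriv (fun x => sin x - (x - x^3/6)) (fun x => cos x - (1 - x^2/2))
    (fun x => by
      have hp : HasDerivAt (fun x : ℝ => x - x^3/6) (1 - x^2/2) x := by
        have := (hasDerivAt_id x).sub ((hasDerivAt_pow 3 x).div_const 6)
        exact this.congr_deriv (by push_cast; ring)
      exact (Real.hasDerivAt_sin x).sub hp)
    (by norm_num)
    (fun x hx => sub_nonneg.2 (Real.one_sub_sq_div_two_le_cos))
  intro x hx; linarith [h x hx]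

lemma cos_le4 : ∀ x : ℝ, 0 ≤ x → cos x ≤ 1 - x^2/2 + x^4/24 := by
  have h := nonneg_of_deriv (fun x => (1 - x^2/2 + x^4/24) - cos x)
    (fun x => sin x - (x - x^3/6))
    (fun x => by
      have hp : HasDerivAt (fun x : ℝ => 1 - x^2/2 + x^4/24) (-(x - x^3/6) ) x := by
        have := (((hasDerivAt_const x (1:ℝ)).sub ((hasDerivAt_pow 2 x).div_const 2)).add
          ((hasDerivAt_pow 4 x).div_const 24))
        exact this.congr_deriv (by push_cast; ring)
      have := hp.sub (Real.hasDerivAt_cos x)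
      exact this.congr_deriv (by ring))
    (by norm_num)
    (fun x hx => sub_nonneg.2 (sin_ge3 x hx))
  intro x hx; linarith [h x hx]

lemma sin_le5 : ∀ x : ℝ, 0 ≤ x → sin x ≤ x - x^3/6 + x^5/120 := by
  have h := nonneg_of_deriv (fun x => (x - x^3/6 + x^5/120) - sin x)
    (fun x => (1 - x^2/2 + x^4/24) - cos x)
    (fun x => by
      have hp : HasDerivAt (fun x : ℝ => x - x^3/6 + x^5/120) (1 - x^2/2 + x^4/24) x := by
        have := ((hasDerivAt_id x).sub ((hasDerivAt_pow 3 x).div_const 6)).add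
          ((hasDerivAt_pow 5 x).div_const 120)
        exact this.congr_deriv (by push_cast; ring)
      exact hp.sub (Real.hasDerivAt_sin x))
    (by norm_num)
    (fun x hx => sub_nonneg.2 (cos_le4 x hx))
  intro x hx; linarith [h x hx]

lemma cos_ge6 : ∀ x : ℝ, 0 ≤ x → 1 - x^2/2 + x^4/24 - x^6/720 ≤ cos x := by
  have h := nonneg_of_deriv (fun x => cos x - (1 - x^2/2 + x^4/24 - x^6/720))
    (fun x => (x - x^3/6 + x^5/120) - sin x)
    (fun x => by
      have hp : HasDerivAt (fun x : ℝ => 1 - x^2/2 + x^4/24 - x^6/720)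
          (-(x - x^3/6 + x^5/120)) x := by
        have := (((hasDerivAt_const x (1:ℝ)).sub ((hasDerivAt_pow 2 x).div_const 2)).add
          ((hasDerivAt_pow 4 x).div_const 24)).sub ((hasDerivAt_pow 6 x).div_const 720)
        exact this.congr_deriv (by push_cast; ring)
      have := (Real.hasDerivAt_cos x).sub hp
      exact this.congr_deriv (by ring))
    (by norm_num)
    (fun x hx => sub_nonneg.2 (sin_le5 x hx))
  intro x hx; linarith [h x hx]

lemma sin_ge7 : ∀ x : ℝ, 0 ≤ x → x - x^3/6 + x^5/120 - x^7/5040 ≤ sin x := by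
  have h := nonneg_of_deriv (fun x => sin x - (x - x^3/6 + x^5/120 - x^7/5040))
    (fun x => cos x - (1 - x^2/2 + x^4/24 - x^6/720))
    (fun x => by
      have hp : HasDerivAt (fun x : ℝ => x - x^3/6 + x^5/120 - x^7/5040)
          (1 - x^2/2 + x^4/24 - x^6/720) x := by
        have := (((hasDerivAt_id x).sub ((hasDerivAt_pow 3 x).div_const 6)).add
          ((hasDerivAt_pow 5 x).div_const 120)).sub ((hasDerivAt_pow 7 x).div_const 5040)
        exact this.congr_deriv (by push_cast; ring)
      exact (Real.hasDerivAt_sin x).sub hp)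
    (by norm_num)
    (fun x hx => sub_nonneg.2 (cos_ge6 x hx))
  intro x hx; linarith [h x hx]

lemma cos_le8 : ∀ x : ℝ, 0 ≤ x → cos x ≤ 1 - x^2/2 + x^4/24 - x^6/720 + x^8/40320 := by
  have h := nonneg_of_deriv (fun x => (1 - x^2/2 + x^4/24 - x^6/720 + x^8/40320) - cos x)
    (fun x => sin x - (x - x^3/6 + x^5/120 - x^7/5040))
    (fun x => by
      have hp : HasDerivAt (fun x : ℝ => 1 - x^2/2 + x^4/24 - x^6/720 + x^8/40320)
          (-(x - x^3/6 + x^5/120 - x^7/5040)) x := by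
        have := ((((hasDerivAt_const x (1:ℝ)).sub ((hasDerivAt_pow 2 x).div_const 2)).add
          ((hasDerivAt_pow 4 x).div_const 24)).sub ((hasDerivAt_pow 6 x).div_const 720)).add
          ((hasDerivAt_pow 8 x).div_const 40320)
        exact this.congr_deriv (by push_cast; ring)
      have := hp.sub (Real.hasDerivAt_cos x)
      exact this.congr_deriv (by ring))
    (by norm_num)
    (fun x hx => sub_nonneg.2 (sin_ge7 x hx))
  intro x hx; linarith [h x hx]

/-- Numerator of the variance ratio (times `2 T²`). -/
noncomputable def NN (T : ℝ) : ℝ := T^2 + T * (Real.sin T * Real.cos T) - 2 * Real.sin T ^ 2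

/-- Denominator of the variance ratio (times `2 T²`). -/
noncomputable def DD (T : ℝ) : ℝ := T^2 - T * (Real.sin T * Real.cos T)

lemma NN_eq (T : ℝ) : NN T = T^2 + (T/2) * Real.sin (2*T) - 1 + Real.cos (2*T) := by
  unfold NN; rw [Real.sin_two_mul, Real.cos_two_mul, Real.sin_sq]; ring

lemma DD_eq (T : ℝ) : DD T = T^2 - (T/2) * Real.sin (2*T) := by
  unfold DD; rw [Real.sin_two_mul]; ring

lemma NN_lower (T : ℝ) (hT : 0 ≤ T) : 2/45 * T^6 - 4/315 * T^8 ≤ NN T := by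
  rw [NN_eq]
  have h2 : (0:ℝ) ≤ 2*T := by linarith
  have hs := mul_le_mul_of_nonneg_left (sin_ge7 (2*T) h2) (by linarith : (0:ℝ) ≤ T/2)
  have hc := cos_ge6 (2*T) h2
  nlinarith [hs, hc]

lemma NN_upper (T : ℝ) (hT : 0 ≤ T) : NN T ≤ 2/45 * T^6 + 2/315 * T^8 := by
  rw [NN_eq]
  have h2 : (0:ℝ) ≤ 2*T := by linarith
  have hs := mul_le_mul_of_nonneg_left (sin_le5 (2*T) h2) (by linarith : (0:ℝ) ≤ T/2)
  have hc := cos_le8 (2*T) h2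
  nlinarith [hs, hc]

lemma DD_lower (T : ℝ) (hT : 0 ≤ T) : 2/3 * T^4 - 2/15 * T^6 ≤ DD T := by
  rw [DD_eq]
  have h2 : (0:ℝ) ≤ 2*T := by linarith
  have hs := mul_le_mul_of_nonneg_left (sin_le5 (2*T) h2) (by linarith : (0:ℝ) ≤ T/2)
  nlinarith [hs]

lemma DD_upper (T : ℝ) (hT : 0 ≤ T) : DD T ≤ 2/3 * T^4 - 2/15 * T^6 + 4/315 * T^8 := by
  rw [DD_eq]
  have h2 : (0:ℝ) ≤ 2*T := by linarith
  have hs := mul_le_mul_of_nonneg_left (sin_ge7 (2*T) h2) (by linarith : (0:ℝ) ≤ T/2)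
  nlinarith [hs]

lemma DD_pos (T : ℝ) (h0 : 0 < T) (h1 : T < 1) : 0 < DD T := by
  have h2 : (0:ℝ) < 2/3 - 2/15 * T^2 := by nlinarith
  have := mul_pos (pow_pos h0 4) h2
  have := DD_lower T h0.le
  nlinarith

lemma NN_nonneg (T : ℝ) (h0 : 0 < T) (h1 : T < 1) : 0 ≤ NN T := by
  have hT2 : T^2 < 1 := by nlinarith
  have h2 : (0:ℝ) ≤ 2/45 - 4/315 * T^2 := by nlinarith
  have := mul_nonneg (le_of_lt (pow_pos h0 6)) h2
  have := NN_lower T h0.le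
  nlinarith

lemma q_tendsto : Tendsto (fun T : ℝ => NN T / (T^2 * DD T))
    (nhdsWithin 0 (Set.Ioi 0)) (nhds (1/15)) := by
  have hl : Tendsto (fun T : ℝ => (2/45 - 4/315 * T^2) / (2/3 - 2/15 * T^2 + 4/315 * T^4))
      (nhdsWithin 0 (Set.Ioi 0)) (nhds (1/15)) := by
    have h : Tendsto (fun T : ℝ => (2/45 - 4/315 * T^2) / (2/3 - 2/15 * T^2 + 4/315 * T^4))
        (nhds 0) (nhds ((2/45 - 4/315 * (0:ℝ)^2) / (2/3 - 2/15 * (0:ℝ)^2 + 4/315 * (0:ℝ)^4))) :=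
      Filter.Tendsto.div (Continuous.tendsto (by continuity) 0)
        (Continuous.tendsto (by continuity) 0) (by norm_num)
    norm_num at h
    exact h.mono_left nhdsWithin_le_nhds
  have hu : Tendsto (fun T : ℝ => (2/45 + 2/315 * T^2) / (2/3 - 2/15 * T^2))
      (nhdsWithin 0 (Set.Ioi 0)) (nhds (1/15)) := by
    have h : Tendsto (fun T : ℝ => (2/45 + 2/315 * T^2) / (2/3 - 2/15 * T^2))
        (nhds 0) (nhds ((2/45 + 2/315 * (0:ℝ)^2) / (2/3 - 2/15 * (0:ℝ)^2))) :=
      Filter.Tendsto.div (Continuous.tendsto (by continuity) 0)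
        (Continuous.tendsto (by continuity) 0) (by norm_num)
    norm_num at h
    exact h.mono_left nhdsWithin_le_nhds
  apply tendsto_of_tendsto_of_tendsto_of_le_of_le' hl hu
  · filter_upwards [Ioo_mem_nhdsGT_of_mem (by norm_num : (0:ℝ) ∈ Set.Ico 0 1)] with T hT
    obtain ⟨hT0, hT1⟩ := hT
    have hT2 : T^2 < 1 := by nlinarith
    have hDl : (0:ℝ) < 2/3 * T^4 - 2/15 * T^6 := by
      have h2 : (0:ℝ) < 2/3 - 2/15 * T^2 := by nlinarith
      nlinarith [mul_pos (pow_pos hT0 4) h2]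
    have hDu : (0:ℝ) < 2/3 * T^4 - 2/15 * T^6 + 4/315 * T^8 := by positivity
    have hD : 0 < DD T := lt_of_lt_of_le hDl (DD_lower T hT0.le)
    have hNl : (0:ℝ) ≤ 2/45 * T^6 - 4/315 * T^8 := by
      have h2 : (0:ℝ) ≤ 2/45 - 4/315 * T^2 := by nlinarith
      nlinarith [mul_nonneg (le_of_lt (pow_pos hT0 6)) h2]
    have hN : 0 ≤ NN T := hNl.trans (NN_lower T hT0.le)
    have hT2pos : (0:ℝ) < T^2 := pow_pos hT0 2
    have key : (2/45 * T^6 - 4/315 * T^8) / (T^2 * (2/3 * T^4 - 2/15 * T^6 + 4/315 * T^8))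
        ≤ NN T / (T^2 * DD T) :=
      div_le_div₀ hN (NN_lower T hT0.le) (mul_pos hT2pos hD)
        (mul_le_mul_of_nonneg_left (DD_upper T hT0.le) hT2pos.le)
    refine le_trans (le_of_eq ?_) key
    have hd2 : (0:ℝ) < 2/3 - 2/15 * T^2 + 4/315 * T^4 := by nlinarith
    rw [div_eq_div_iff hd2.ne' (mul_pos hT2pos hDu).ne']
    ring
  · filter_upwards [Ioo_mem_nhdsGT_of_mem (by norm_num : (0:ℝ) ∈ Set.Ico 0 1)] with T hT
    obtain ⟨hT0, hT1⟩ := hT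
    have hT2 : T^2 < 1 := by nlinarith
    have hDl : (0:ℝ) < 2/3 * T^4 - 2/15 * T^6 := by
      have h2 : (0:ℝ) < 2/3 - 2/15 * T^2 := by nlinarith
      nlinarith [mul_pos (pow_pos hT0 4) h2]
    have hT2pos : (0:ℝ) < T^2 := pow_pos hT0 2
    have hNu : (0:ℝ) ≤ 2/45 * T^6 + 2/315 * T^8 := by positivity
    have key : NN T / (T^2 * DD T)
        ≤ (2/45 * T^6 + 2/315 * T^8) / (T^2 * (2/3 * T^4 - 2/15 * T^6)) :=
      div_le_div₀ hNu (NN_upper T hT0.le) (mul_pos hT2pos hDl)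
        (mul_le_mul_of_nonneg_left (DD_lower T hT0.le) hT2pos.le)
    refine le_trans key (le_of_eq ?_)
    have hden : (0:ℝ) < 2/3 - 2/15 * T^2 := by nlinarith
    rw [div_eq_div_iff (mul_pos hT2pos hDl).ne' hden.ne']
    ring

lemma mu1_eq (r T : ℝ) : mu1 r T = r * Real.sin T / T := by
  unfold mu1
  rw [intervalIntegral.integral_const_mul, integral_cos]
  rw [Real.sin_neg]
  field_simp
  ring

lemma var2_eq (r T : ℝ) : Var2 r T = r^2 * (T - Real.sin T * Real.cos T) / (2 * T) := by
  unfold Var2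
  have h : ∀ t : ℝ, (r * Real.sin t)^2 = r^2 * Real.sin t ^ 2 := fun t => by ring
  simp_rw [h]
  rw [intervalIntegral.integral_const_mul, integral_sin_sq]
  rw [Real.sin_neg, Real.cos_neg]
  field_simp
  ring

lemma var1_eq (r T : ℝ) (hT : T ≠ 0) :
    Var1 r T = r^2 * ((T^2 + T * (Real.sin T * Real.cos T) - 2 * Real.sin T ^ 2) / (2 * T^2)) := by
  unfold Var1
  have hmu : mu1 r T = r * Real.sin T / T := mu1_eq r T
  have h : ∀ t : ℝ, (r * Real.cos t - mu1 r T) ^ 2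
      = r^2 * Real.cos t ^ 2 - (2 * r * mu1 r T) * Real.cos t + (mu1 r T)^2 := fun t => by ring
  simp_rw [h]
  rw [intervalIntegral.integral_add, intervalIntegral.integral_sub,
    intervalIntegral.integral_const_mul, intervalIntegral.integral_const_mul,
    integral_cos_sq, integral_cos, intervalIntegral.integral_const]
  · rw [Real.sin_neg, Real.cos_neg, hmu]
    field_simp
    ring_nf
    field_simp
    ring
  · exact ((continuous_const.mul (Real.continuous_cos.pow 2)).intervalIntegrable _ _)
  · exact ((continuous_const.mul Real.continuous_cos).intervalIntegrable _ _)
  · exact (((continuous_const.mul (Real.continuous_cos.pow 2)).sub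
      (continuous_const.mul Real.continuous_cos)).intervalIntegrable _ _)
  · exact (continuous_const.intervalIntegrable _ _)

lemma ratio_eq (r T : ℝ) (hr : r ≠ 0) (hT : 0 < T) (hD : 0 < DD T) :
    Var1 r T / Var2 r T = NN T / DD T := by
  have hTd : T - Real.sin T * Real.cos T ≠ 0 := by
    intro h
    apply hD.ne'
    unfold DD
    have h2 : T * (T - Real.sin T * Real.cos T) = T^2 - T * (Real.sin T * Real.cos T) := by ring
    rw [← h2, h, mul_zero]
  have hDne : DD T ≠ 0 := hD.ne'
  rw [var1_eq r T hT.ne', var2_eq r T]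
  unfold NN DD
  unfold DD at hDne
  rw [div_eq_div_iff (by positivity) hDne]
  field_simp

end Aux

/-- fix reals `r ≠ 0` and `α, ρ > 0`, and for `κ > 0` set
`T(κ) = (α/(2ρ)) κ`. Then
`lim_{κ → 0⁺} (1/κ) · √(Var₁(T(κ)) / Var₂(T(κ))) = α / (2 √15 ρ)`;
that is, `σ₂/σ₁ ≈ M κ` with `M = α/(2 √15 ρ)`. -/
theorem singular_value_ratio_curvature (r α ρ : ℝ) (hr : r ≠ 0) (hα : 0 < α) (hρ : 0 < ρ) :
    Tendsto
      (fun κ : ℝ => (1 / κ) *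
        Real.sqrt (Var1 r ((α / (2 * ρ)) * κ) / Var2 r ((α / (2 * ρ)) * κ)))
      (nhdsWithin 0 (Set.Ioi 0)) (nhds (α / (2 * Real.sqrt 15 * ρ))) := by
  set c := α / (2 * ρ) with hc
  have hcpos : 0 < c := by positivity
  have hscale : Tendsto (fun κ : ℝ => c * κ) (nhdsWithin 0 (Set.Ioi 0))
      (nhdsWithin 0 (Set.Ioi 0)) := by
    apply tendsto_nhdsWithin_of_tendsto_nhds_of_eventually_within
    · have h : Tendsto (fun κ : ℝ => c * κ) (nhds 0) (nhds (c * 0)) :=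
        (continuous_const.mul continuous_id).tendsto 0
      simpa using h.mono_left nhdsWithin_le_nhds
    · filter_upwards [self_mem_nhdsWithin] with κ hκ
      exact mul_pos hcpos hκ
  have hmain : Tendsto (fun κ : ℝ => c * Real.sqrt (NN (c*κ) / ((c*κ)^2 * DD (c*κ))))
      (nhdsWithin 0 (Set.Ioi 0)) (nhds (c * Real.sqrt (1/15))) :=
    (Filter.Tendsto.comp (Real.continuous_sqrt.tendsto _)
      (q_tendsto.comp hscale)).const_mul c
  have hval : c * Real.sqrt (1/15) = α / (2 * Real.sqrt 15 * ρ) := by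
    have h15 : (0:ℝ) < Real.sqrt 15 := Real.sqrt_pos.2 (by norm_num)
    have hs : Real.sqrt (1/15) = 1 / Real.sqrt 15 := by
      rw [one_div, one_div, Real.sqrt_inv]
    rw [hs, hc, div_mul_div_comm, mul_one]
    congr 1
    ring
  rw [← hval]
  apply hmain.congr'
  filter_upwards [Ioo_mem_nhdsGT_of_mem (Set.mem_Ico.2 ⟨le_rfl, by positivity⟩ :
      (0:ℝ) ∈ Set.Ico 0 (1/c)), self_mem_nhdsWithin] with κ hκ hκ'
  obtain ⟨hκ0, hκ1⟩ := hκ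
  set T := c * κ with hT
  have hT0 : 0 < T := mul_pos hcpos hκ0
  have hT1 : T < 1 := by
    have h := (lt_div_iff₀ hcpos).mp hκ1
    calc T = c * κ := rfl
      _ < 1 := by rw [mul_comm]; linarith [h]
  have hD : 0 < DD T := DD_pos T hT0 hT1
  have hN : 0 ≤ NN T := NN_nonneg T hT0 hT1
  have hratio : Var1 r T / Var2 r T = NN T / DD T := ratio_eq r T hr hT0 hD
  have hq : NN T / (T^2 * DD T) = (NN T / DD T) / T^2 := by ring
  rw [hq, Real.sqrt_div (div_nonneg hN hD.le), Real.sqrt_sq hT0.le]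
  rw [hratio]
  have h1κ : 1 / κ = c / T := by
    rw [hT]; field_simp
  rw [h1κ]
  ring
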